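/- Let D be a digraph on n vertices whose adjacency matrix has the property that any two distinct rows are either identical or orthogonal (as 0-1 vectors), any two distinct columns are either identical or orthogonal, and every row and every column has exactly r ones (r ≥ 1). Then D is the pattern of a unitary matrix, i.e., there exists an n×n unitary matrix U such that U_{uv} ≠ 0 if and only if (u,v) is an arc of D. -/

import Mathlib

open Finset

set_option linter.unusedSectionVars false

namespace RichardsAux

variable {n : ℕ} (A : Fin n → Fin n → Prop) [∀ u v, Decidable (A u v)]

/-- Two rows are equal. -/
def Req (u u' : Fin n) : Prop := ∀ w, A u w ↔ A u' w

instance (u u' : Fin n) : Decidable (Req A u u') :=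
  inferInstanceAs (Decidable (∀ w, A u w ↔ A u' w))

/-- The class of rows equal to row `u`. -/
def RC (u : Fin n) : Finset (Fin n) := univ.filter (fun u' => Req A u' u)

/-- Index of `u` inside its row class. -/
def iIdx (u : Fin n) : ℕ := ((RC A u).filter (fun x => x < u)).card

theorem req_refl (u : Fin n) : Req A u u := fun _ => Iff.rfl
theorem req_symm {u u'} (h : Req A u u') : Req A u' u := fun w => (h w).symm
theorem req_trans {u u' u''} (h : Req A u u') (h' : Req A u' u'') : Req A u u'' :=
  fun w => (h w).trans (h' w)

theorem mem_RC {u u' : Fin n} : u' ∈ RC A u ↔ Req A u' u := by simp [RC]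

theorem self_mem_RC (u : Fin n) : u ∈ RC A u := (mem_RC A).mpr (req_refl A u)

theorem RC_congr {u u'} (h : Req A u u') : RC A u = RC A u' := by
  ext x
  simp only [mem_RC]
  exact ⟨fun hx => req_trans A hx h, fun hx => req_trans A hx (req_symm A h)⟩

theorem filter_eq_RC (hshare : ∀ u u' w, A u w → A u' w → Req A u u')
    {u v : Fin n} (h : A u v) :
    univ.filter (fun u' => A u' v) = RC A u := by
  ext u'
  simp only [mem_filter, mem_univ, true_and, mem_RC]
  exact ⟨fun h' => hshare u' u v h' h, fun h' => (h' v).mpr h⟩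

theorem RC_card (hshare : ∀ u u' w, A u w → A u' w → Req A u u') {r : ℕ} (hr : 1 ≤ r)
    (hout : ∀ u : Fin n, (univ.filter fun v => A u v).card = r)
    (hin : ∀ v : Fin n, (univ.filter fun u => A u v).card = r)
    (u : Fin n) : (RC A u).card = r := by
  obtain ⟨w, hw⟩ : (univ.filter fun v => A u v).Nonempty :=
    card_pos.mp (by rw [hout u]; omega)
  simp only [mem_filter, mem_univ, true_and] at hw
  rw [← filter_eq_RC A hshare hw]
  exact hin w

theorem iIdx_lt_card (u : Fin n) : iIdx A u < (RC A u).card := by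
  apply card_lt_card
  rw [Finset.ssubset_def]
  refine ⟨filter_subset _ _, fun hsub => ?_⟩
  have := hsub (self_mem_RC A u)
  simp at this

theorem iIdx_inj {u₀ u u' : Fin n} (hu : u ∈ RC A u₀) (hu' : u' ∈ RC A u₀)
    (h : iIdx A u = iIdx A u') : u = u' := by
  have key : ∀ x y : Fin n, x ∈ RC A u₀ → x < y →
      ((RC A u₀).filter (fun z => z < x)).card < ((RC A u₀).filter (fun z => z < y)).card := by
    intro x y hx hxy
    apply card_lt_card
    rw [Finset.ssubset_def]
    constructor
    · intro z hz
      simp only [mem_filter] at hz ⊢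
      exact ⟨hz.1, lt_trans hz.2 hxy⟩
    · intro hsub
      have := hsub (mem_filter.mpr ⟨hx, hxy⟩)
      simp at this
  have hcu : RC A u = RC A u₀ := RC_congr A ((mem_RC A).mp hu)
  have hcu' : RC A u' = RC A u₀ := RC_congr A ((mem_RC A).mp hu')
  unfold iIdx at h
  rw [hcu, hcu'] at h
  rcases lt_trichotomy u u' with hlt | heq | hlt
  · exact absurd h (Nat.ne_of_lt (key u u' hu hlt))
  · exact heq
  · exact absurd h.symm (Nat.ne_of_lt (key u' u hu' hlt))

theorem iIdx_image {r : ℕ} (hcard : ∀ u, (RC A u).card = r) (u₀ : Fin n) :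
    (RC A u₀).image (iIdx A) = range r := by
  apply eq_of_subset_of_card_le
  · intro k hk
    simp only [mem_image] at hk
    obtain ⟨u, hu, rfl⟩ := hk
    have h1 := iIdx_lt_card A u
    rw [hcard u] at h1
    exact mem_range.mpr h1
  · rw [card_range,
      card_image_of_injOn (fun u hu u' hu' h => iIdx_inj A hu hu' h), hcard u₀]

theorem sum_iIdx {r : ℕ} (hcard : ∀ u, (RC A u).card = r) (u₀ : Fin n) (g : ℕ → ℂ) :
    ∑ u ∈ RC A u₀, g (iIdx A u) = ∑ k ∈ range r, g k := by
  rw [← iIdx_image A hcard u₀,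
    sum_image (fun u hu u' hu' h => iIdx_inj A hu hu' h)]

end RichardsAux
open Finset

theorem sum_zeta {r : ℕ} (hr : 1 ≤ r) {a b : ℕ} (ha : a < r) (hb : b < r) :
    (∑ k ∈ range r,
      Complex.exp (2 * (Real.pi : ℂ) * Complex.I * ((b : ℂ) - (a : ℂ)) / r) ^ k)
      = if a = b then (r : ℂ) else 0 := by
  have hrne : (r : ℂ) ≠ 0 := Nat.cast_ne_zero.mpr (by omega)
  by_cases hab : a = b
  · subst hab
    simp [sub_self, Complex.exp_zero]
  · rw [if_neg hab]
    set z : ℂ := 2 * (Real.pi : ℂ) * Complex.I * ((b : ℂ) - (a : ℂ)) / r with hz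
    have hζr : Complex.exp z ^ r = 1 := by
      rw [← Complex.exp_nat_mul,
        show (r : ℂ) * z = ((((b : ℤ) - (a : ℤ)) : ℤ) : ℂ) * (2 * (Real.pi : ℂ) * Complex.I)
          from by rw [hz]; push_cast; field_simp,
        Complex.exp_int_mul_two_pi_mul_I]
    have hζ1 : Complex.exp z ≠ 1 := by
      intro hone
      rw [Complex.exp_eq_one_iff] at hone
      obtain ⟨m, hm⟩ := hone
      rw [hz, div_eq_iff hrne] at hm
      have h2πI : (2 * (Real.pi : ℂ) * Complex.I) ≠ 0 := by
        simp [Complex.I_ne_zero, Real.pi_ne_zero]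
      have h2 : ((b : ℂ) - a) * (2 * (Real.pi : ℂ) * Complex.I)
          = ((m : ℂ) * r) * (2 * (Real.pi : ℂ) * Complex.I) := by
        linear_combination hm
      have h3 : (b : ℂ) - a = (m : ℂ) * r := mul_right_cancel₀ h2πI h2
      have hint : (b : ℤ) - a = m * r := by exact_mod_cast h3
      have ha' : (0 : ℤ) ≤ (a : ℤ) := Int.ofNat_nonneg a
      have ha'' : (a : ℤ) < (r : ℤ) := by exact_mod_cast ha
      have hb' : (0 : ℤ) ≤ (b : ℤ) := Int.ofNat_nonneg b
      have hb'' : (b : ℤ) < (r : ℤ) := by exact_mod_cast hb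
      have habz : (a : ℤ) ≠ (b : ℤ) := by
        intro hx; exact hab (by exact_mod_cast hx)
      rcases lt_trichotomy m 0 with h | h | h
      · have hmle : m ≤ -1 := by omega
        have h5 : m * (r : ℤ) ≤ -1 * r :=
          mul_le_mul_of_nonneg_right hmle (by exact_mod_cast Nat.zero_le r)
        linarith
      · subst h; simp at hint; omega
      · have hmge : 1 ≤ m := by omega
        have h5 : 1 * (r : ℤ) ≤ m * r :=
          mul_le_mul_of_nonneg_right hmge (by exact_mod_cast Nat.zero_le r)
        linarith
    rw [geom_sum_eq hζ1, hζr]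
    simp

theorem richards_regular_pattern_unitary {n r : ℕ} (hr : 1 ≤ r)
    (A : Fin n → Fin n → Prop) [∀ u v, Decidable (A u v)]
    (hrows : ∀ u v : Fin n, u ≠ v →
      (∀ w, A u w ↔ A v w) ∨ (∀ w, ¬(A u w ∧ A v w)))
    (hcols : ∀ u v : Fin n, u ≠ v →
      (∀ w, A w u ↔ A w v) ∨ (∀ w, ¬(A w u ∧ A w v)))
    (hout : ∀ u : Fin n, (Finset.univ.filter fun v => A u v).card = r)
    (hin : ∀ v : Fin n, (Finset.univ.filter fun u => A u v).card = r) :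
    ∃ U : Matrix (Fin n) (Fin n) ℂ,
      U ∈ Matrix.unitaryGroup (Fin n) ℂ ∧ ∀ u v, U u v ≠ 0 ↔ A u v := by
  set B : Fin n → Fin n → Prop := fun u v => A v u with hBdef
  letI instB : ∀ u v : Fin n, Decidable (B u v) := fun u v =>
    inferInstanceAs (Decidable (A v u))
  have hout' : ∀ u : Fin n, (Finset.univ.filter fun v => A u v).card = r := by exact hout
  have hin' : ∀ v : Fin n, (Finset.univ.filter fun u => A u v).card = r := by exact hin
  have hrne : (r : ℂ) ≠ 0 := Nat.cast_ne_zero.mpr (by omega)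
  have hsqrt : Real.sqrt r ≠ 0 :=
    ne_of_gt (Real.sqrt_pos.mpr (by exact_mod_cast Nat.lt_of_lt_of_le Nat.zero_lt_one hr))
  have hshareA : ∀ u u' w, A u w → A u' w → RichardsAux.Req A u u' := by
    intro u u' w h h'
    rcases eq_or_ne u u' with rfl | hne
    · exact RichardsAux.req_refl A u
    · rcases hrows u u' hne with hc | hc
      · exact hc
      · exact absurd ⟨h, h'⟩ (hc w)
  have hshareB : ∀ v v' u, B v u → B v' u → RichardsAux.Req B v v' := by
    intro v v' u h h'
    rcases eq_or_ne v v' with rfl | hne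
    · exact RichardsAux.req_refl B v
    · rcases hcols v v' hne with hc | hc
      · exact hc
      · exact absurd ⟨h, h'⟩ (hc u)
  have hcardA : ∀ u, (RichardsAux.RC A u).card = r := by
    exact RichardsAux.RC_card A hshareA hr hout hin
  have hcardB : ∀ v, (RichardsAux.RC B v).card = r := by
    exact RichardsAux.RC_card B hshareB hr (fun u => hin u) (fun v => hout v)
  set U : Matrix (Fin n) (Fin n) ℂ := fun u v =>
    if A u v then (((Real.sqrt r)⁻¹ : ℝ) : ℂ) *
      Complex.exp (2 * (Real.pi : ℂ) * Complex.I *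
        ((RichardsAux.iIdx A u : ℂ) * (RichardsAux.iIdx B v : ℂ)) / r) else 0
    with hU
  refine ⟨U, ?_, ?_⟩
  · rw [Matrix.mem_unitaryGroup_iff']
    ext v v'
    rw [Matrix.mul_apply, Matrix.one_apply]
    by_cases hC : RichardsAux.Req B v v'
    · have hiff : ∀ u, A u v ↔ A u v' := fun u => hC u
      obtain ⟨u₀, hu₀⟩ : (Finset.univ.filter fun u => A u v).Nonempty :=
        Finset.card_pos.mp (by rw [hin' v]; omega)
      simp only [Finset.mem_filter, Finset.mem_univ, true_and] at hu₀
      set a : ℕ := RichardsAux.iIdx B v with hadef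
      set b : ℕ := RichardsAux.iIdx B v' with hbdef
      have ha : a < r := hcardB v ▸ RichardsAux.iIdx_lt_card B v
      have hb : b < r := hcardB v' ▸ RichardsAux.iIdx_lt_card B v'
      have hfil := RichardsAux.filter_eq_RC A hshareA hu₀
      have hrestrict : ∑ u, (star U) v u * U u v'
          = ∑ u ∈ RichardsAux.RC A u₀, (star U) v u * U u v' := by
        rw [← hfil]
        refine (Finset.sum_subset (Finset.filter_subset _ _) ?_).symm
        intro u _ hu
        simp only [Finset.mem_filter, Finset.mem_univ, true_and] at hu
        rw [Matrix.star_apply, hU]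
        dsimp only
        rw [if_neg hu, star_zero, zero_mul]
      rw [hrestrict]
      set z : ℂ := 2 * (Real.pi : ℂ) * Complex.I * ((b : ℂ) - (a : ℂ)) / r with hzdef
      have hterm : ∀ u ∈ RichardsAux.RC A u₀,
          (star U) v u * U u v'
            = (r : ℂ)⁻¹ * Complex.exp z ^ (RichardsAux.iIdx A u) := by
        intro u hu
        have h1 : A u v := by
          rw [← hfil] at hu
          simpa using hu
        have h2 : A u v' := (hiff u).mp h1
        rw [Matrix.star_apply, hU]
        dsimp only
        rw [if_pos h1, if_pos h2]
        rw [← hadef, ← hbdef]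
        simp only [star_mul', Complex.star_def, Complex.conj_ofReal, ← Complex.exp_conj,
          map_mul, map_div₀, Complex.conj_I, map_ofNat, map_natCast, Complex.conj_ofReal]
        rw [← Complex.exp_nat_mul, mul_mul_mul_comm, ← Complex.exp_add]
        congr 1
        · rw [← Complex.ofReal_mul, ← mul_inv, Real.mul_self_sqrt (Nat.cast_nonneg r),
            Complex.ofReal_inv, Complex.ofReal_natCast]
        · congr 1
          rw [hzdef]
          field_simp
          ring
      rw [Finset.sum_congr rfl hterm, ← Finset.mul_sum,
        RichardsAux.sum_iIdx A hcardA u₀ (fun k => Complex.exp z ^ k)]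
      rw [hzdef, sum_zeta hr ha hb]
      by_cases hv : v = v'
      · rw [if_pos (show a = b by rw [hadef, hbdef, hv]), if_pos hv, inv_mul_cancel₀ hrne]
      · have hab : a ≠ b := by
          intro h
          exact hv (RichardsAux.iIdx_inj B (RichardsAux.self_mem_RC B v)
            ((RichardsAux.mem_RC B).mpr (RichardsAux.req_symm B hC)) h)
        rw [if_neg hab, if_neg hv, mul_zero]
    · have hvv' : v ≠ v' := fun h => hC (h ▸ RichardsAux.req_refl B v)
      rw [if_neg hvv']
      apply Finset.sum_eq_zero
      intro u _
      rw [Matrix.star_apply, hU]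
      dsimp only
      by_cases h1 : A u v
      · have h2 : ¬ A u v' := fun h2 => hC (hshareB v v' u h1 h2)
        rw [if_neg h2, mul_zero]
      · rw [if_neg h1, star_zero, zero_mul]
  · intro u v
    rw [hU]
    dsimp only
    by_cases h : A u v
    · simp [h, Complex.exp_ne_zero, Complex.ofReal_ne_zero, hsqrt]
    · simp [h]
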